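/- Suppose there exists γ* ∈ Γ₁ with A[γ*] ≻ 0, and let (x,t) ∈ S_SDP satisfy 2t = sup_{γ∈Γ₁} [γ, q(x)]. Then span(G(x,t)) does not contain the line ℝ × {0_m} ⊆ ℝ^{1+m}; equivalently, G(x,t)^⊥ is spanned by its intersection with the affine slice {(γ₀,γ) : γ₀ = 1}. -/

import Mathlib

noncomputable section
open Matrix Set

/-- Dot-product style inner product on `ℝ × (Fin m → ℝ)` (i.e. `ℝ^{1+m}`). -/
def ipr {m : ℕ} (v w : ℝ × (Fin m → ℝ)) : ℝ := v.1 * w.1 + v.2 ⬝ᵥ w.2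

/-- `A(γ₀, γ) = γ₀ A₀ + ∑ i, γ i • A i`. -/
def Amix {ι : Type*} [Fintype ι] {m : ℕ} (A0 : Matrix ι ι ℝ)
    (A : Fin m → Matrix ι ι ℝ) (g0 : ℝ) (g : Fin m → ℝ) : Matrix ι ι ℝ :=
  g0 • A0 + ∑ i, g i • A i

/-- `b(γ) = b₀ + ∑ i, γ i • b i` (the `γ₀ = 1` slice). -/
def bmix {ι : Type*} {m : ℕ} (b0 : ι → ℝ) (b : Fin m → ι → ℝ) (g : Fin m → ℝ) : ι → ℝ :=
  b0 + ∑ i, g i • b i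

/-- The cone of convex Lagrange multipliers `Γ`. -/
def Gamma {ι : Type*} [Fintype ι] {m : ℕ} (A0 : Matrix ι ι ℝ)
    (A : Fin m → Matrix ι ι ℝ) : Set (ℝ × (Fin m → ℝ)) :=
  {p | 0 ≤ p.1 ∧ (∀ i, 0 ≤ p.2 i) ∧ (Amix A0 A p.1 p.2).PosSemidef}

/-- The slice `Γ₁` of `Γ` at `γ₀ = 1`. -/
def Gamma1 {ι : Type*} [Fintype ι] {m : ℕ} (A0 : Matrix ι ι ℝ)
    (A : Fin m → Matrix ι ι ℝ) : Set (Fin m → ℝ) :=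
  {g | (∀ i, 0 ≤ g i) ∧ (Amix A0 A 1 g).PosSemidef}

/-- Polar cone with respect to `ipr`. -/
def polarCone {m : ℕ} (S : Set (ℝ × (Fin m → ℝ))) : Set (ℝ × (Fin m → ℝ)) :=
  {v | ∀ w ∈ S, ipr v w ≤ 0}

/-- The quadratic function `x ↦ xᵀ M x + 2 bᵀ x + c`. -/
def quadF {ι : Type*} [Fintype ι] (M : Matrix ι ι ℝ) (b : ι → ℝ) (c : ℝ) (x : ι → ℝ) : ℝ :=
  x ⬝ᵥ M.mulVec x + 2 * (b ⬝ᵥ x) + c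

/-- The vector `q(x) = (q₀(x), q₁(x), …, q_m(x)) ∈ ℝ^{1+m}`. -/
def qVec {ι : Type*} [Fintype ι] {m : ℕ} (A0 : Matrix ι ι ℝ) (b0 : ι → ℝ) (c0 : ℝ)
    (A : Fin m → Matrix ι ι ℝ) (b : Fin m → ι → ℝ) (c : Fin m → ℝ)
    (x : ι → ℝ) : ℝ × (Fin m → ℝ) :=
  (quadF A0 b0 c0 x, fun i => quadF (A i) (b i) (c i) x)

/-- The first unit vector `e₀ ∈ ℝ^{1+m}`. -/
def e0 {m : ℕ} : ℝ × (Fin m → ℝ) := (1, 0)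

/-- `[γ, q(x)] = q₀(x) + ∑ i, γ i * q i (x)`. -/
def brkt {ι : Type*} [Fintype ι] {m : ℕ} (A0 : Matrix ι ι ℝ) (b0 : ι → ℝ) (c0 : ℝ)
    (A : Fin m → Matrix ι ι ℝ) (b : Fin m → ι → ℝ) (c : Fin m → ℝ)
    (g : Fin m → ℝ) (x : ι → ℝ) : ℝ :=
  quadF A0 b0 c0 x + ∑ i, g i * quadF (A i) (b i) (c i) x

/-- The projected SDP relaxation `S_SDP = {(x,t) : q(x) - 2t e₀ ∈ Γ°}`. -/
def SSDP {ι : Type*} [Fintype ι] {m : ℕ} (A0 : Matrix ι ι ℝ) (b0 : ι → ℝ) (c0 : ℝ)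
    (A : Fin m → Matrix ι ι ℝ) (b : Fin m → ι → ℝ) (c : Fin m → ℝ) :
    Set ((ι → ℝ) × ℝ) :=
  {p | qVec A0 b0 c0 A b c p.1 - (2 * p.2) • e0 ∈ polarCone (Gamma A0 A)}

/-- The QCQP epigraph `S = {(x,t) : q₀(x) ≤ 2t, q i (x) ≤ 0 ∀ i}`. -/
def Sepi {ι : Type*} [Fintype ι] {m : ℕ} (A0 : Matrix ι ι ℝ) (b0 : ι → ℝ) (c0 : ℝ)
    (A : Fin m → Matrix ι ι ℝ) (b : Fin m → ι → ℝ) (c : Fin m → ℝ) :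
    Set ((ι → ℝ) × ℝ) :=
  {p | quadF A0 b0 c0 p.1 ≤ 2 * p.2 ∧ ∀ i, quadF (A i) (b i) (c i) p.1 ≤ 0}

/-- `F` is a face of the convex cone `K`. -/
def IsFaceOf {E : Type*} [Add E] (K F : Set E) : Prop :=
  F ⊆ K ∧ ∀ y ∈ K, ∀ z ∈ K, y + z ∈ F → y ∈ F ∧ z ∈ F

/-- `G` is the minimal face of `K` containing `v`. -/
def IsMinFace {E : Type*} [Add E] (K : Set E) (v : E) (G : Set E) : Prop :=
  IsFaceOf K G ∧ v ∈ G ∧ ∀ G', IsFaceOf K G' → v ∈ G' → G ⊆ G'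

/-- The set of rounding directions `R(x,t)` at a point `p` of a convex set `C`. -/
def Rset {E : Type*} [AddCommGroup E] [Module ℝ E] (C : Set E) (p : E) : Set E :=
  {d | ∃ ε : ℝ, 0 < ε ∧ ∀ s ∈ Set.Icc (-ε) ε, p + s • d ∈ C}

/-- The first-order rounding directions `R'(x,t)`, relative to a face `G` of `Γ°`. -/
def Rset' {ι : Type*} [Fintype ι] {m : ℕ} (A0 : Matrix ι ι ℝ) (b0 : ι → ℝ) (c0 : ℝ)
    (A : Fin m → Matrix ι ι ℝ) (b : Fin m → ι → ℝ) (c : Fin m → ℝ)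
    (x : ι → ℝ) (t : ℝ) (G : Set (ℝ × (Fin m → ℝ))) : Set ((ι → ℝ) × ℝ) :=
  {d | ∀ α : ℝ,
    qVec A0 b0 c0 A b c (x + α • d.1) - (2 * (t + α * d.2)) • e0 ∈ Submodule.span ℝ G}

/-- Orthogonal complement (as a set) of a subset of `ℝ^{1+m}` w.r.t. `ipr`. -/
def orthC {m : ℕ} (G : Set (ℝ × (Fin m → ℝ))) : Set (ℝ × (Fin m → ℝ)) :=
  {v | ∀ w ∈ G, ipr v w = 0}


namespace Stmt12Aux

/-- The equivalence `ℝ × ℝ^m ≃ ℝ^{1+m}` as Euclidean space. -/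
def phi (m : ℕ) : (ℝ × (Fin m → ℝ)) ≃ₗ[ℝ] EuclideanSpace ℝ (Fin (m+1)) where
  toFun p := WithLp.toLp 2 (Fin.cons p.1 p.2 : Fin (m+1) → ℝ)
  invFun f := (f 0, fun i => f i.succ)
  map_add' p q := by
    ext i
    induction i using Fin.cases <;> simp
  map_smul' r p := by
    ext i
    induction i using Fin.cases <;> simp
  left_inv p := by simp
  right_inv f := by
    ext i
    induction i using Fin.cases <;> simp

lemma ipr_eq_inner {m : ℕ} (v w : ℝ × (Fin m → ℝ)) :
    ipr v w = (inner ℝ (phi m v) (phi m w) : ℝ) := by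
  simp [ipr, phi, PiLp.inner_apply, RCLike.inner_apply, Fin.sum_univ_succ,
    dotProduct, starRingEnd_apply, mul_comm]

lemma ipr_add_left {m : ℕ} (u v w : ℝ × (Fin m → ℝ)) :
    ipr (u + v) w = ipr u w + ipr v w := by
  simp [ipr, add_dotProduct]; ring

lemma ipr_sub_left {m : ℕ} (u v w : ℝ × (Fin m → ℝ)) :
    ipr (u - v) w = ipr u w - ipr v w := by
  simp [ipr, sub_dotProduct]; ring

lemma ipr_smul_left {m : ℕ} (r : ℝ) (u w : ℝ × (Fin m → ℝ)) :
    ipr (r • u) w = r * ipr u w := by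
  simp [ipr, smul_dotProduct, smul_eq_mul]; ring

lemma ipr_zero_left {m : ℕ} (w : ℝ × (Fin m → ℝ)) : ipr 0 w = 0 := by
  simp [ipr]

end Stmt12Aux

/-- if `2t = sup_{γ ∈ Γ₁} [γ, q(x)]`, then `span(G(x,t))` does not
contain the line `ℝ × {0}`, and `G(x,t)^⊥` is spanned by its slice at `γ₀ = 1`. -/
theorem stmt12 {n m : ℕ} (A0 : Matrix (Fin n) (Fin n) ℝ) (b0 : Fin n → ℝ) (c0 : ℝ)
    (A : Fin m → Matrix (Fin n) (Fin n) ℝ) (b : Fin m → Fin n → ℝ) (c : Fin m → ℝ)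
    (hA0 : A0.IsSymm) (hA : ∀ i, (A i).IsSymm)
    (hdef : ∃ g ∈ Gamma1 A0 A, (Amix A0 A 1 g).PosDef)
    (x : Fin n → ℝ) (t : ℝ) (hxt : (x, t) ∈ SSDP A0 b0 c0 A b c)
    (hsup : IsLUB ((fun g => brkt A0 b0 c0 A b c g x) '' Gamma1 A0 A) (2 * t))
    (G : Set (ℝ × (Fin m → ℝ)))
    (hG : IsMinFace (polarCone (Gamma A0 A))
      (qVec A0 b0 c0 A b c x - (2 * t) • e0) G) :
    ((1 : ℝ), (0 : Fin m → ℝ)) ∉ Submodule.span ℝ G ∧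
    orthC G =
      ↑(Submodule.span ℝ (orthC G ∩ {p : ℝ × (Fin m → ℝ) | p.1 = 1})) := by
  classical
  obtain ⟨gs, hgs, hgsdef⟩ := hdef
  set K : Set (ℝ × (Fin m → ℝ)) := polarCone (Gamma A0 A) with hK
  set v : ℝ × (Fin m → ℝ) := qVec A0 b0 c0 A b c x - (2 * t) • e0 with hv
  have hvK : v ∈ K := hxt
  -- the set G is contained in G₀ = {w ∈ K : v - w ∈ K}
  have hKadd : ∀ a ∈ K, ∀ b' ∈ K, a + b' ∈ K := by
    intro a ha b' hb' p hp
    have := ha p hp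
    have := hb' p hp
    rw [Stmt12Aux.ipr_add_left]
    linarith
  have h0K : (0 : ℝ × (Fin m → ℝ)) ∈ K := by
    intro p hp
    rw [Stmt12Aux.ipr_zero_left]
  have hG0face : IsFaceOf K {w | w ∈ K ∧ v - w ∈ K} := by
    refine ⟨fun w hw => hw.1, ?_⟩
    intro y hy z hz hyz
    have h1 : v - y = (v - (y + z)) + z := by abel
    have h2 : v - z = (v - (y + z)) + y := by abel
    exact ⟨⟨hy, h1 ▸ hKadd _ hyz.2 _ hz⟩, ⟨hz, h2 ▸ hKadd _ hyz.2 _ hy⟩⟩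
  have hvG0 : v ∈ {w | w ∈ K ∧ v - w ∈ K} := ⟨hvK, by simpa using h0K⟩
  have hGsub : G ⊆ {w | w ∈ K ∧ v - w ∈ K} := hG.2.2 _ hG0face hvG0
  -- membership of (1, γ) in Γ for γ ∈ Γ₁
  have hmemGamma : ∀ g ∈ Gamma1 A0 A, ((1 : ℝ), g) ∈ Gamma A0 A := by
    intro g hg
    exact ⟨zero_le_one, hg.1, hg.2⟩
  -- key evaluation: ipr v (1, γ) = brkt γ x - 2t
  have hipv : ∀ g : Fin m → ℝ,
      ipr v ((1 : ℝ), g) = brkt A0 b0 c0 A b c g x - 2 * t := by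
    intro g
    simp only [hv, ipr, qVec, e0, brkt, Prod.fst_sub, Prod.snd_sub, Prod.smul_mk,
      smul_eq_mul, mul_one, smul_zero, sub_zero, dotProduct]
    rw [Finset.sum_congr rfl (fun i _ => mul_comm ((fun i => quadF (A i) (b i) (c i) x) i) (g i))]
    ring
  -- 2t is an upper bound
  have hub : ∀ g ∈ Gamma1 A0 A, brkt A0 b0 c0 A b c g x ≤ 2 * t := by
    intro g hg
    exact hsup.1 ⟨g, hg, rfl⟩
  -- interval bound for points of G
  have hGbound : ∀ w ∈ G, ∀ g ∈ Gamma1 A0 A,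
      |ipr w ((1 : ℝ), g)| ≤ 1 * (2 * t - brkt A0 b0 c0 A b c g x) := by
    intro w hw g hg
    have h1 : ipr w ((1 : ℝ), g) ≤ 0 := (hGsub hw).1 _ (hmemGamma g hg)
    have h2 : ipr (v - w) ((1 : ℝ), g) ≤ 0 := (hGsub hw).2 _ (hmemGamma g hg)
    rw [Stmt12Aux.ipr_sub_left, hipv g] at h2
    rw [abs_le]
    constructor <;> nlinarith
  -- span bound
  have hspanBound : ∀ u ∈ Submodule.span ℝ G, ∃ C : ℝ, 0 ≤ C ∧
      ∀ g ∈ Gamma1 A0 A,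
        |ipr u ((1 : ℝ), g)| ≤ C * (2 * t - brkt A0 b0 c0 A b c g x) := by
    intro u hu
    induction hu using Submodule.span_induction with
    | mem w hw => exact ⟨1, zero_le_one, hGbound w hw⟩
    | zero =>
        exact ⟨0, le_refl 0, fun g hg => by
          rw [Stmt12Aux.ipr_zero_left]; simp⟩
    | add y z hy hz ihy ihz =>
        obtain ⟨C1, hC1, h1⟩ := ihy
        obtain ⟨C2, hC2, h2⟩ := ihz
        refine ⟨C1 + C2, by linarith, fun g hg => ?_⟩
        rw [Stmt12Aux.ipr_add_left]
        calc |ipr y (1, g) + ipr z (1, g)| ≤ |ipr y (1, g)| + |ipr z (1, g)| := abs_add_le _ _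
          _ ≤ C1 * (2 * t - brkt A0 b0 c0 A b c g x)
              + C2 * (2 * t - brkt A0 b0 c0 A b c g x) := add_le_add (h1 g hg) (h2 g hg)
          _ = (C1 + C2) * (2 * t - brkt A0 b0 c0 A b c g x) := by ring
    | smul r y hy ihy =>
        obtain ⟨C, hC, h1⟩ := ihy
        refine ⟨|r| * C, mul_nonneg (abs_nonneg r) hC, fun g hg => ?_⟩
        rw [Stmt12Aux.ipr_smul_left, abs_mul, mul_assoc]
        exact mul_le_mul_of_nonneg_left (h1 g hg) (abs_nonneg r)
  -- first claim
  have claim1 : ((1 : ℝ), (0 : Fin m → ℝ)) ∉ Submodule.span ℝ G := by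
    intro hmem
    obtain ⟨C, hC, hbd⟩ := hspanBound _ hmem
    have hlt : 2 * t - 1 / (C + 1) < 2 * t := by
      have : (0 : ℝ) < 1 / (C + 1) := by positivity
      linarith
    obtain ⟨s, ⟨g, hg, rfl⟩, hs1, hs2⟩ := hsup.exists_between hlt
    have h1 : |ipr ((1 : ℝ), (0 : Fin m → ℝ)) ((1 : ℝ), g)| = 1 := by
      simp [ipr]
    have h2 := hbd g hg
    rw [h1] at h2
    have h3 : 2 * t - brkt A0 b0 c0 A b c g x < 1 / (C + 1) := by linarith
    have h4 : C * (2 * t - brkt A0 b0 c0 A b c g x) ≤ C * (1 / (C + 1)) := by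
      apply mul_le_mul_of_nonneg_left (le_of_lt h3) hC
    have h5 : C * (1 / (C + 1)) < 1 := by
      rw [mul_one_div, div_lt_one (by linarith)]
      linarith
    linarith
  refine ⟨claim1, ?_⟩
  -- second claim
  set φ := Stmt12Aux.phi m with hφ
  set W : Submodule ℝ (EuclideanSpace ℝ (Fin (m+1))) := Submodule.span ℝ (φ '' G) with hW
  have hWmap : W = Submodule.map (φ : (ℝ × (Fin m → ℝ)) →ₗ[ℝ] _) (Submodule.span ℝ G) := by
    rw [Submodule.map_span]; rfl
  -- orthC G corresponds to Wᗮ under φ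
  have horth : ∀ u : ℝ × (Fin m → ℝ), u ∈ orthC G ↔ φ u ∈ Wᗮ := by
    intro u
    constructor
    · intro hu
      rw [Submodule.mem_orthogonal]
      intro y hy
      induction hy using Submodule.span_induction with
      | mem w hw =>
          obtain ⟨w', hw', rfl⟩ := hw
          rw [real_inner_comm, ← Stmt12Aux.ipr_eq_inner]
          exact hu w' hw'
      | zero => simp
      | add a b' _ _ iha ihb => rw [inner_add_left, iha, ihb, add_zero]
      | smul r a _ iha => rw [inner_smul_left, iha, mul_zero]
    · intro hu w hw
      rw [Stmt12Aux.ipr_eq_inner, real_inner_comm]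
      exact (Submodule.mem_orthogonal W (φ u)).mp hu _ (Submodule.subset_span ⟨w, hw, rfl⟩)
  -- there is an element of orthC G with first coordinate 1
  have hexists : ∃ u0 : ℝ × (Fin m → ℝ), u0 ∈ orthC G ∧ u0.1 = 1 := by
    have hnot : φ ((1 : ℝ), (0 : Fin m → ℝ)) ∉ W := by
      rw [hWmap]
      intro hmem
      obtain ⟨y, hy, hyeq⟩ := hmem
      have : y = ((1 : ℝ), (0 : Fin m → ℝ)) := φ.injective hyeq
      exact claim1 (this ▸ hy)
    rw [← Submodule.orthogonal_orthogonal W] at hnot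
    rw [Submodule.mem_orthogonal] at hnot
    push_neg at hnot
    obtain ⟨y, hy, hyne⟩ := hnot
    set u' := φ.symm y with hu'
    have hyu : y = φ u' := by rw [hu', LinearEquiv.apply_symm_apply]
    have hu'orth : u' ∈ orthC G := (horth u').mpr (hyu ▸ hy)
    have hipne : ipr u' ((1 : ℝ), (0 : Fin m → ℝ)) ≠ 0 := by
      rw [Stmt12Aux.ipr_eq_inner]
      rw [hyu] at hyne
      exact hyne
    have hfst : u'.1 ≠ 0 := by
      intro h
      apply hipne
      simp [ipr, h]
    refine ⟨(u'.1)⁻¹ • u', ?_, ?_⟩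
    · intro w hw
      rw [Stmt12Aux.ipr_smul_left, hu'orth w hw, mul_zero]
    · simp [hfst]
  obtain ⟨u0, hu0, hu01⟩ := hexists
  -- orthC G is a submodule (as preimage of Wᗮ)
  have horthAdd : ∀ a ∈ orthC G, ∀ b' ∈ orthC G, a + b' ∈ orthC G := by
    intro a ha b' hb' w hw
    rw [Stmt12Aux.ipr_add_left, ha w hw, hb' w hw, add_zero]
  have horthSmul : ∀ (r : ℝ), ∀ a ∈ orthC G, r • a ∈ orthC G := by
    intro r a ha w hw
    rw [Stmt12Aux.ipr_smul_left, ha w hw, mul_zero]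
  have horthZero : (0 : ℝ × (Fin m → ℝ)) ∈ orthC G := fun w _ => Stmt12Aux.ipr_zero_left w
  ext u
  constructor
  · intro hu
    have hw1 : u + (1 - u.1) • u0 ∈ orthC G ∩ {p : ℝ × (Fin m → ℝ) | p.1 = 1} := by
      refine ⟨horthAdd _ hu _ (horthSmul _ _ hu0), ?_⟩
      simp [hu01]
    have hw2 : u0 ∈ orthC G ∩ {p : ℝ × (Fin m → ℝ) | p.1 = 1} := ⟨hu0, hu01⟩
    have : u = (u + (1 - u.1) • u0) + (u.1 - 1) • u0 := by
      rw [add_assoc, ← add_smul]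
      simp
    rw [this]
    exact Submodule.add_mem _ (Submodule.subset_span hw1)
      (Submodule.smul_mem _ _ (Submodule.subset_span hw2))
  · intro hu
    induction hu using Submodule.span_induction with
    | mem w hw => exact hw.1
    | zero => exact horthZero
    | add a b' _ _ iha ihb => exact horthAdd _ iha _ ihb
    | smul r a _ iha => exact horthSmul r _ iha
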